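/- Output distribution of the Parity Halving circuit on a poor man's cat state: fix n ≥ 1, x : Fin n → Bool of even Hamming weight |x|, and z : Fin n → Bool with complement z̄. Let ⟨z,x⟩ denote the number of i with z_i = x_i = true, and define ψ : (Fin n → Bool) → ℂ by ψ(z) = i^{⟨z,x⟩}/√2, ψ(z̄) = i^{⟨z̄,x⟩}/√2, and ψ(v) = 0 for all other v (i denotes the imaginary unit). Let H_n be the n-qubit Hadamard transform, (H_n ψ)(y) = 2^{−n/2}·∑_{v : Fin n → Bool} (−1)^{⟨v,y⟩}·ψ(v), where ⟨v,y⟩ counts the i with v_i = y_i = true. Then for every y : Fin n → Bool, |(H_n ψ)(y)|² equals 2^{−(n−1)} if |y| ≡ |x|/2 + ⟨z,x⟩ (mod 2), and equals 0 otherwise. -/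

import Mathlib

/-- Hamming weight of a Boolean string. -/
def hamming {n : ℕ} (x : Fin n → Bool) : ℕ :=
  (Finset.univ.filter fun i => x i = true).card

/-- `inn u v` is the number of indices `i` with `u i = v i = true`. -/
def inn {n : ℕ} (u v : Fin n → Bool) : ℕ :=
  (Finset.univ.filter fun i => u i = true ∧ v i = true).card

/-- The state obtained by applying the controlled-phase layer of the Parity Halving
circuit (for input `x`) to the poor man's cat state `(|z⟩ + |z̄⟩)/√2`:
amplitude `i^{⟨z,x⟩}/√2` on `z`, `i^{⟨z̄,x⟩}/√2` on `z̄`, and `0` elsewhere. -/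
noncomputable def phpState (n : ℕ) (x z : Fin n → Bool) : (Fin n → Bool) → ℂ :=
  fun v =>
    if v = z then Complex.I ^ inn z x / (Real.sqrt 2 : ℂ)
    else if v = (fun i => !(z i)) then
      Complex.I ^ inn (fun i => !(z i)) x / (Real.sqrt 2 : ℂ)
    else 0

/-- The `n`-qubit Hadamard transform: `(H_n ψ)(y) = 2^{−n/2} ∑_v (−1)^{⟨v,y⟩} ψ(v)`. -/
noncomputable def hadamardTransform (n : ℕ) (ψ : (Fin n → Bool) → ℂ)
    (y : Fin n → Bool) : ℂ :=
  ((Real.sqrt 2 : ℂ) ^ n)⁻¹ * ∑ v, (-1 : ℂ) ^ inn v y * ψ v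

lemma inn_add {n : ℕ} (u v : Fin n → Bool) :
    inn u v + inn (fun i => !(u i)) v = hamming v := by
  unfold inn hamming
  rw [← Finset.card_union_of_disjoint]
  · congr 1
    ext i
    simp only [Finset.mem_union, Finset.mem_filter, Finset.mem_univ, true_and]
    cases u i <;> cases v i <;> simp
  · rw [Finset.disjoint_filter]
    intro i _ h
    simp [h.1]

lemma abs_term (a b c m : ℕ) :
    ‖(-1:ℂ)^a * Complex.I^c + (-1:ℂ)^b * ((-1:ℂ)^(m+c) * Complex.I^c)‖ ^ 2
      = if (a+b) % 2 = (m+c) % 2 then 4 else 0 := by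
  have habs : ‖Complex.I ^ c‖ = 1 := by simp
  have key : (-1:ℂ)^a * (Complex.I^c) + (-1:ℂ)^b * ((-1:ℂ)^(m+c) * Complex.I^c)
      = ((-1:ℂ)^a + (-1:ℂ)^b * (-1:ℂ)^(m+c)) * Complex.I^c := by ring
  rw [key, norm_mul, habs, mul_one]
  rcases Nat.even_or_odd a with ha | ha <;>
  rcases Nat.even_or_odd b with hb | hb <;>
  rcases Nat.even_or_odd (m+c) with hc | hc <;>
  simp only [ha.neg_one_pow, hb.neg_one_pow, hc.neg_one_pow] <;>
  simp only [Nat.even_iff, Nat.odd_iff] at ha hb hc <;>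
  first
  | (rw [if_pos (by omega)]; norm_num)
  | (rw [if_neg (by omega)]; norm_num)


/-- Output distribution of the Parity Halving circuit on a poor man's cat state:
each `y` with `|y| ≡ |x|/2 + ⟨z,x⟩ (mod 2)` occurs with probability `2^{−(n−1)}`, and
all other `y` occur with probability `0`. -/
theorem php_circuit_on_poor_mans_cat (n : ℕ) (hn : 1 ≤ n) (x z : Fin n → Bool)
    (hx : Even (hamming x)) (y : Fin n → Bool) :
    ‖hadamardTransform n (phpState n x z) y‖ ^ 2 =
      if hamming y % 2 = (hamming x / 2 + inn z x) % 2
      then ((2 : ℝ) ^ (n - 1))⁻¹ else 0 := by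
  obtain ⟨m, hm⟩ := hx
  have hzz' : (fun i => !(z i)) ≠ z := fun h => by simpa using congrFun h ⟨0, hn⟩
  have hab : inn z y + inn (fun i => !(z i)) y = hamming y := inn_add z y
  have hcd : inn z x + inn (fun i => !(z i)) x = m + m := by rw [inn_add z x, hm]
  have hId : Complex.I ^ (inn (fun i => !(z i)) x)
      = (-1:ℂ)^(m + inn z x) * Complex.I ^ inn z x := by
    apply mul_left_cancel₀ (pow_ne_zero (inn z x) Complex.I_ne_zero)
    rw [← pow_add, hcd]
    have h1 : Complex.I ^ (m + m) = (-1:ℂ)^m := by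
      rw [← two_mul, pow_mul, Complex.I_sq]
    rw [h1, show Complex.I ^ inn z x * ((-1:ℂ)^(m + inn z x) * Complex.I ^ inn z x)
        = (-1:ℂ)^(m + inn z x) * (Complex.I^2)^(inn z x) by ring, Complex.I_sq,
      ← pow_add, show m + inn z x + inn z x = m + 2 * inn z x by ring, pow_add,
      pow_mul, neg_one_sq, one_pow, mul_one]
  have hpt : ∀ v : Fin n → Bool, (-1:ℂ)^inn v y * phpState n x z v
      = (if v = z then (-1:ℂ)^(inn z y) * (Complex.I^(inn z x) / (Real.sqrt 2:ℂ)) else 0)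
      + (if v = (fun i => !(z i)) then
          (-1:ℂ)^(inn (fun i => !(z i)) y) *
            (Complex.I^(inn (fun i => !(z i)) x) / (Real.sqrt 2:ℂ)) else 0) := by
    intro v
    unfold phpState
    by_cases h1 : v = z
    · subst h1
      rw [if_pos rfl, if_pos rfl, if_neg (fun h => hzz' h.symm), add_zero]
    · by_cases h2 : v = (fun i => !(z i))
      · subst h2
        rw [if_neg h1, if_pos rfl, if_neg h1, if_pos rfl, zero_add]
      · simp [h1, h2]
  have hsum : hadamardTransform n (phpState n x z) y
      = ((Real.sqrt 2:ℂ)^n)⁻¹ *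
        (((-1:ℂ)^(inn z y) * Complex.I^(inn z x)
          + (-1:ℂ)^(inn (fun i => !(z i)) y) * Complex.I^(inn (fun i => !(z i)) x))
          / (Real.sqrt 2:ℂ)) := by
    unfold hadamardTransform
    congr 1
    rw [Finset.sum_congr rfl (fun v _ => hpt v), Finset.sum_add_distrib,
      Finset.sum_ite_eq' Finset.univ z, Finset.sum_ite_eq' Finset.univ (fun i => !(z i))]
    simp only [Finset.mem_univ, if_true]
    ring
  rw [hsum, hId, norm_mul, norm_div, norm_inv, norm_pow, Complex.norm_real, Real.norm_eq_abs,
    abs_of_nonneg (Real.sqrt_nonneg 2), mul_pow, div_pow, inv_pow,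
    abs_term (inn z y) (inn (fun i => !(z i)) y) (inn z x) m]
  have hm2 : hamming x / 2 = m := by omega
  rw [hm2, hab]
  have hsq : (Real.sqrt 2 : ℝ)^2 = 2 := Real.sq_sqrt (by norm_num)
  have hpn : ((Real.sqrt 2 : ℝ)^n)^2 = 2^n := by
    rw [← pow_mul, mul_comm, pow_mul, hsq]
  by_cases h : hamming y % 2 = (m + inn z x) % 2
  · rw [if_pos h, if_pos h, hpn, hsq]
    have h2n : (2:ℝ)^n = 2^(n-1) * 2 := by
      rw [← pow_succ]
      congr 1
      omega
    rw [h2n]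
    have : (0:ℝ) < 2^(n-1) := by positivity
    field_simp
    ring
  · rw [if_neg h, if_neg h]
    simp
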